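/- arXiv:2302.11847 — 2 statements merged into one kernel-verified Lean document; each statement's English description precedes it below -/
import Mathlib

section
/- Suppose H : 𝒫(ℝ^d) → [0,∞] is monotone and finitely subadditive. If f : ℝ^d → [0,∞] is quasicontinuous, then for every locally finite nonnegative Borel measure μ on ℝ^d satisfying μ(U) ≤ H(U) for every open set U ⊆ ℝ^d, one has ∫f dμ ≤ ∫f dH. -/
open MeasureTheory Filter Set Topology
open scoped ENNReal

/-- The Choquet integral `∫ f dH = ∫₀^∞ H({f > t}) dt` of `f : α → [0,∞]`
with respect to a set function `H`. -/
noncomputable def choquet {α : Type*} (H : Set α → ℝ≥0∞) (f : α → ℝ≥0∞) : ℝ≥0∞ :=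
  ∫⁻ t in Set.Ioi (0 : ℝ), H {x | ENNReal.ofReal t < f x}

/-- A set function is monotone if `E ⊆ F` implies `H E ≤ H F`. -/
def MonotoneSF {α : Type*} (H : Set α → ℝ≥0∞) : Prop :=
  ∀ ⦃E F : Set α⦄, E ⊆ F → H E ≤ H F

/-- Strong subadditivity: `H(E ∩ F) + H(E ∪ F) ≤ H(E) + H(F)`. -/
def StronglySubadditive {α : Type*} (H : Set α → ℝ≥0∞) : Prop :=
  ∀ E F : Set α, H (E ∩ F) + H (E ∪ F) ≤ H E + H F

def FinitelySubadditive {α : Type*} (H : Set α → ℝ≥0∞) : Prop :=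
  ∀ E F : Set α, H (E ∪ F) ≤ H E + H F

def CountablySubadditive {α : Type*} (H : Set α → ℝ≥0∞) : Prop :=
  ∀ E : ℕ → Set α, H (⋃ n, E n) ≤ ∑' n, H (E n)

/-- Quasi-uniform convergence of a sequence of real-valued functions:
for every `ε > 0` there is a set `E` with `H E ≤ ε` such that the sequence
converges uniformly on the complement of `E`. -/
def QUTendsto {α : Type*} (H : Set α → ℝ≥0∞) (f : ℕ → α → ℝ) (g : α → ℝ) : Prop :=
  ∀ ε : ℝ, 0 < ε → ∃ E : Set α, H E ≤ ENNReal.ofReal ε ∧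
    TendstoUniformlyOn f g Filter.atTop Eᶜ

/-- Quasi-uniform convergence of a sequence of `[0,∞]`-valued functions: for every
`ε > 0` there is a set `E` with `H E ≤ ε` such that the functions are finite on the
complement of `E` and converge uniformly to `g` there. -/
def QUTendstoENN {α : Type*} (H : Set α → ℝ≥0∞) (f : ℕ → α → ℝ≥0∞) (g : α → ℝ≥0∞) : Prop :=
  ∀ ε : ℝ, 0 < ε → ∃ E : Set α, H E ≤ ENNReal.ofReal ε ∧
    (∀ n, ∀ x ∉ E, f n x ≠ ⊤) ∧ (∀ x ∉ E, g x ≠ ⊤) ∧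
    TendstoUniformlyOn (fun n x => (f n x).toReal) (fun x => (g x).toReal) Filter.atTop Eᶜ

/-- A function `f : α → [-∞,∞]` is quasicontinuous with respect to `H` if for every
`ε > 0` there is an open set `ω` with `H ω ≤ ε` such that `f` is finite and continuous
on the complement of `ω`. -/
def QuasicontinuousE {α : Type*} [TopologicalSpace α] (H : Set α → ℝ≥0∞) (f : α → EReal) : Prop :=
  ∀ ε : ℝ, 0 < ε → ∃ ω : Set α, IsOpen ω ∧ H ω ≤ ENNReal.ofReal ε ∧
    (∀ x ∉ ω, f x ≠ ⊤ ∧ f x ≠ ⊥) ∧ ContinuousOn f ωᶜ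

/-- Quasicontinuity of a real-valued function. -/
def QuasicontinuousR {α : Type*} [TopologicalSpace α] (H : Set α → ℝ≥0∞) (f : α → ℝ) : Prop :=
  ∀ ε : ℝ, 0 < ε → ∃ ω : Set α, IsOpen ω ∧ H ω ≤ ENNReal.ofReal ε ∧ ContinuousOn f ωᶜ

/-- Quasicontinuity of a `[0,∞]`-valued function: finite and continuous off an open
set of small capacity. -/
def QuasicontinuousENN {α : Type*} [TopologicalSpace α] (H : Set α → ℝ≥0∞) (f : α → ℝ≥0∞) :
    Prop :=
  ∀ ε : ℝ, 0 < ε → ∃ ω : Set α, IsOpen ω ∧ H ω ≤ ENNReal.ofReal ε ∧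
    (∀ x ∉ ω, f x ≠ ⊤) ∧ ContinuousOn f ωᶜ

/-- Evanescence: for every open `U` with `H U < ∞` and every closed `F ⊆ U`,
`H(F \ B_r) → 0` as `r → ∞`. -/
def Evanescent {d : ℕ} (H : Set (EuclideanSpace ℝ (Fin d)) → ℝ≥0∞) : Prop :=
  ∀ U : Set (EuclideanSpace ℝ (Fin d)), IsOpen U → H U < ⊤ →
    ∀ F : Set (EuclideanSpace ℝ (Fin d)), IsClosed F → F ⊆ U →
      Filter.Tendsto (fun r : ℝ => H (F \ Metric.ball 0 r)) Filter.atTop (nhds 0)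

/-- Semifiniteness: every open set of infinite capacity contains subsets of
arbitrarily large finite capacity. -/
def SemifiniteSF {α : Type*} [TopologicalSpace α] (H : Set α → ℝ≥0∞) : Prop :=
  ∀ U : Set α, IsOpen U → H U = ⊤ → ∀ M : ℝ, 0 ≤ M →
    ∃ E ⊆ U, ENNReal.ofReal M ≤ H E ∧ H E < ⊤

/-- The regularization `H̃(A) = sup { H(D) : D ⊆ A, H(D) < ∞ }`. -/
noncomputable def tildeSF {α : Type*} (H : Set α → ℝ≥0∞) (A : Set α) : ℝ≥0∞ :=
  ⨆ (D : Set α) (_ : D ⊆ A) (_ : H D < ⊤), H D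

lemma vol_layer (c : ℝ≥0∞) : volume ({t : ℝ | ENNReal.ofReal t < c} ∩ Ioi 0) = c := by
  rcases eq_or_ne c ∞ with rfl | hc
  · have h : {t : ℝ | ENNReal.ofReal t < ⊤} = univ := by
      ext t; simp [ENNReal.ofReal_lt_top]
    rw [h, univ_inter, Real.volume_Ioi]
  · have h : {t : ℝ | ENNReal.ofReal t < c} ∩ Ioi 0 = Ioo 0 c.toReal := by
      ext t
      simp only [mem_inter_iff, mem_setOf_eq, mem_Ioi, mem_Ioo]
      constructor
      · rintro ⟨h1, h2⟩
        exact ⟨h2, (ENNReal.ofReal_lt_iff_lt_toReal h2.le hc).mp h1⟩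
      · rintro ⟨h1, h2⟩
        exact ⟨(ENNReal.ofReal_lt_iff_lt_toReal h1.le hc).mpr h2, h1⟩
    rw [h, Real.volume_Ioo, sub_zero, ENNReal.ofReal_toReal hc]

lemma layercake_enn {α : Type*} [MeasurableSpace α] (μ : Measure α) [SigmaFinite μ]
    {g : α → ℝ≥0∞} (hg : Measurable g) :
    ∫⁻ x, g x ∂μ = ∫⁻ t in Set.Ioi (0:ℝ), μ {x | ENNReal.ofReal t < g x} := by
  have hS : ∀ x, MeasurableSet {t : ℝ | ENNReal.ofReal t < g x} := fun x =>
    (ENNReal.measurable_ofReal) measurableSet_Iio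
  have hprod : MeasurableSet {p : α × ℝ | ENNReal.ofReal p.2 < g p.1} :=
    measurableSet_lt (ENNReal.measurable_ofReal.comp measurable_snd) (hg.comp measurable_fst)
  have huncurry : AEMeasurable
      (Function.uncurry fun (x : α) (t : ℝ) =>
        ({t : ℝ | ENNReal.ofReal t < g x}.indicator (fun _ => (1:ℝ≥0∞)) t))
      (μ.prod (volume.restrict (Ioi 0))) := by
    have : (Function.uncurry fun (x : α) (t : ℝ) =>
        ({t : ℝ | ENNReal.ofReal t < g x}.indicator (fun _ => (1:ℝ≥0∞)) t)) =
        {p : α × ℝ | ENNReal.ofReal p.2 < g p.1}.indicator (fun _ => (1:ℝ≥0∞)) := by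
      ext p; simp [Function.uncurry, Set.indicator_apply]
    rw [this]
    exact ((measurable_const.indicator hprod)).aemeasurable
  calc ∫⁻ x, g x ∂μ
      = ∫⁻ x, (∫⁻ t in Ioi (0:ℝ),
          ({t : ℝ | ENNReal.ofReal t < g x}.indicator (fun _ => (1:ℝ≥0∞)) t)) ∂μ := by
        refine lintegral_congr fun x => ?_
        rw [lintegral_indicator (hS x), setLIntegral_one, Measure.restrict_apply (hS x),
          vol_layer]
    _ = ∫⁻ t in Ioi (0:ℝ), ∫⁻ x,
          ({t : ℝ | ENNReal.ofReal t < g x}.indicator (fun _ => (1:ℝ≥0∞)) t) ∂μ := by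
        exact lintegral_lintegral_swap huncurry
    _ = ∫⁻ t in Ioi (0:ℝ), μ {x | ENNReal.ofReal t < g x} := by
        refine lintegral_congr fun t => ?_
        have : ∀ x, ({t : ℝ | ENNReal.ofReal t < g x}.indicator (fun _ => (1:ℝ≥0∞)) t)
            = ({x : α | ENNReal.ofReal t < g x}.indicator (fun _ => (1:ℝ≥0∞)) x) := by
          intro x; simp [Set.indicator_apply]
        simp_rw [this]
        have hm : MeasurableSet {x : α | ENNReal.ofReal t < g x} :=
          measurableSet_lt measurable_const hg
        rw [lintegral_indicator hm, setLIntegral_one]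


/-- For a quasicontinuous `f : ℝ^d → [0,∞]` and a locally finite
nonnegative Borel measure `μ ≤ H` on open sets, the Lebesgue integral of `f` with
respect to `μ` is at most the Choquet integral of `f`. -/
theorem lintegral_le_choquet {d : ℕ}
    (H : Set (EuclideanSpace ℝ (Fin d)) → ℝ≥0∞)
    (hmono : MonotoneSF H) (hsub : FinitelySubadditive H)
    (f : EuclideanSpace ℝ (Fin d) → ℝ≥0∞) (hf : QuasicontinuousENN H f)
    (μ : MeasureTheory.Measure (EuclideanSpace ℝ (Fin d)))
    (hloc : MeasureTheory.IsLocallyFiniteMeasure μ)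
    (hμH : ∀ U : Set (EuclideanSpace ℝ (Fin d)), IsOpen U → μ U ≤ H U) :
    ∫⁻ x, f x ∂μ ≤ choquet H f := by
  unfold choquet
  haveI := hloc
  -- Step 1: f is AEMeasurable
  have hqc : ∀ n : ℕ, ∃ ω : Set (EuclideanSpace ℝ (Fin d)), IsOpen ω ∧
      H ω ≤ ENNReal.ofReal (1 / (n + 1)) ∧ ContinuousOn f ωᶜ := by
    intro n
    obtain ⟨ω, hωo, hωH, -, hcont⟩ := hf (1 / (n + 1)) (by positivity)
    exact ⟨ω, hωo, hωH, hcont⟩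
  choose ω hωo hωH hωc using hqc
  set N : Set (EuclideanSpace ℝ (Fin d)) := ⋂ n, ω n with hN
  have hNmeas : MeasurableSet N := MeasurableSet.iInter fun n => (hωo n).measurableSet
  have hμN : μ N = 0 := by
    have hle : ∀ n : ℕ, μ N ≤ ENNReal.ofReal (1 / (n + 1)) := fun n =>
      (measure_mono (iInter_subset _ n)).trans ((hμH _ (hωo n)).trans (hωH n))
    have htend : Tendsto (fun n : ℕ => ENNReal.ofReal (1 / (n + 1))) atTop (nhds 0) := by
      rw [show (0:ℝ≥0∞) = ENNReal.ofReal 0 by simp]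
      exact (ENNReal.continuous_ofReal.tendsto 0).comp
        tendsto_one_div_add_atTop_nhds_zero_nat
    exact le_antisymm (ge_of_tendsto' htend hle) zero_le
  have hfm : AEMeasurable f μ := by
    have h1 : AEMeasurable f (μ.restrict Nᶜ) := by
      have : Nᶜ = ⋃ n, (ω n)ᶜ := by simp [hN, compl_iInter]
      rw [this]
      rw [aemeasurable_iUnion_iff]
      exact fun n => (hωc n).aemeasurable (hωo n).isClosed_compl.measurableSet
    have h2 : AEMeasurable f (μ.restrict N) := by
      rw [Measure.restrict_eq_zero.mpr hμN]
      exact aemeasurable_zero_measure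
    have : μ = μ.restrict N + μ.restrict Nᶜ := (Measure.restrict_add_restrict_compl hNmeas).symm
    rw [this]
    exact aemeasurable_add_measure_iff.mpr ⟨h2, h1⟩
  -- Step 2: key pointwise bound
  have key : ∀ a : ℝ≥0∞, μ {x | a < f x} ≤ H {x | a < f x} := by
    intro a
    refine ENNReal.le_of_forall_pos_le_add fun ε hε _ => ?_
    obtain ⟨w, hwo, hwH, -, hwc⟩ := hf ε (by exact_mod_cast hε)
    obtain ⟨u, huo, hueq⟩ := continuousOn_iff'.mp hwc (Ioi a) isOpen_Ioi
    have hsub1 : {x | a < f x} ⊆ u ∪ w := by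
      intro x hx
      by_cases hxw : x ∈ w
      · exact Or.inr hxw
      · exact Or.inl ((hueq.subset ⟨hx, hxw⟩).1)
    have hsub2 : u ∪ w ⊆ {x | a < f x} ∪ w := by
      rintro x (hxu | hxw)
      · by_cases hxw : x ∈ w
        · exact Or.inr hxw
        · exact Or.inl (hueq.symm.subset ⟨hxu, hxw⟩).1
      · exact Or.inr hxw
    calc μ {x | a < f x} ≤ μ (u ∪ w) := measure_mono hsub1
      _ ≤ H (u ∪ w) := hμH _ (huo.union hwo)
      _ ≤ H ({x | a < f x} ∪ w) := hmono hsub2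
      _ ≤ H {x | a < f x} + H w := hsub _ _
      _ ≤ H {x | a < f x} + ε := by
          gcongr
          rwa [ENNReal.ofReal_coe_nnreal] at hwH
  -- Step 3: layer cake and conclusion
  set g := hfm.mk f with hg
  have hgm : Measurable g := hfm.measurable_mk
  have hfg : f =ᵐ[μ] g := hfm.ae_eq_mk
  have hsets : ∀ t : ℝ, μ {x | ENNReal.ofReal t < g x} = μ {x | ENNReal.ofReal t < f x} := by
    intro t
    refine measure_congr ?_
    filter_upwards [hfg] with x hx
    show (ENNReal.ofReal t < g x) = (ENNReal.ofReal t < f x)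
    rw [hx]
  calc ∫⁻ x, f x ∂μ = ∫⁻ x, g x ∂μ := lintegral_congr_ae hfg
    _ = ∫⁻ t in Ioi (0:ℝ), μ {x | ENNReal.ofReal t < g x} := layercake_enn μ hgm
    _ = ∫⁻ t in Ioi (0:ℝ), μ {x | ENNReal.ofReal t < f x} := lintegral_congr fun t => hsets t
    _ ≤ ∫⁻ t in Ioi (0:ℝ), H {x | ENNReal.ofReal t < f x} := lintegral_mono fun t => key _
end

section
/- Suppose H : 𝒫(ℝ^d) → [0,∞] is monotone, strongly subadditive, and countably subadditive. Let (f_n) be a sequence of real-valued quasicontinuous functions on ℝ^d with ∫|f_n| dH < ∞ for every n, which is Cauchy with respect to the Choquet integral, i.e. for every ε > 0 there exists N such that ∫|f_m − f_n| dH ≤ ε for all m, n ≥ N. Then there exists a real-valued quasicontinuous function f on ℝ^d with ∫|f| dH < ∞ such that lim_{n→∞} ∫|f_n − f| dH = 0 (i.e. the space L¹(H) of equivalence classes of quasicontinuous functions with finite Choquet integral, where f ∼ g whenever f = g outside a set of H-capacity zero, equipped with the norm ∫|f| dH, is a Banach space). -/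
open MeasureTheory Filter Set Topology
open scoped ENNReal

section Aux
variable {α : Type*} {H : Set α → ℝ≥0∞}

lemma distAnti (hmono : MonotoneSF H) (F : α → ℝ≥0∞) :
    Antitone fun t : ℝ => H {x | ENNReal.ofReal t < F x} := fun s t hst =>
  hmono fun x hx => lt_of_le_of_lt (ENNReal.ofReal_le_ofReal hst) hx

lemma distMeas (hmono : MonotoneSF H) (F : α → ℝ≥0∞) :
    Measurable fun t : ℝ => H {x | ENNReal.ofReal t < F x} :=
  (distAnti hmono F).measurable

lemma lintegral_Ioi_comp_mul {G : ℝ → ℝ≥0∞} (hG : Measurable G) {c : ℝ} (hc : 0 < c) :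
    ∫⁻ t in Set.Ioi (0:ℝ), G (c * t) = ENNReal.ofReal c⁻¹ * ∫⁻ t in Set.Ioi (0:ℝ), G t := by
  have h1 : ∫⁻ t in Set.Ioi (0:ℝ), G t ∂(Measure.map (fun x => c * x) volume)
      = ∫⁻ t in (fun x => c * x) ⁻¹' Set.Ioi (0:ℝ), G (c * t) :=
    setLIntegral_map measurableSet_Ioi hG (measurable_const_mul c)
  have hpre : (fun x => c * x) ⁻¹' Set.Ioi (0:ℝ) = Set.Ioi 0 := by
    ext x
    simp only [mem_preimage, mem_Ioi]
    exact mul_pos_iff_of_pos_left hc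
  rw [Real.map_volume_mul_left hc.ne', hpre] at h1
  rw [← h1, Measure.restrict_smul, lintegral_smul_measure, abs_of_pos (inv_pos.mpr hc), smul_eq_mul]

lemma chebyshev (hmono : MonotoneSF H) (F : α → ℝ≥0∞) {s : ℝ} (hs : 0 < s) :
    H {x | ENNReal.ofReal s < F x} ≤ (ENNReal.ofReal s)⁻¹ * choquet H F := by
  have key : H {x | ENNReal.ofReal s < F x} * ENNReal.ofReal s ≤ choquet H F := by
    have h1 : H {x | ENNReal.ofReal s < F x} * ENNReal.ofReal s
        = ∫⁻ _ in Set.Ioc (0:ℝ) s, H {x | ENNReal.ofReal s < F x} := by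
      rw [setLIntegral_const, Real.volume_Ioc, sub_zero]
    rw [h1]
    refine le_trans (setLIntegral_mono (distMeas hmono F) fun t ht => distAnti hmono F ht.2) ?_
    exact lintegral_mono_set Ioc_subset_Ioi_self
  rw [mul_comm, ← div_eq_mul_inv, ENNReal.le_div_iff_mul_le (Or.inl (by simp [hs]))
    (Or.inl ENNReal.ofReal_ne_top)]
  exact key

lemma finsub (hssa : StronglySubadditive H) (E F : Set α) : H (E ∪ F) ≤ H E + H F :=
  le_trans le_add_self (hssa E F)

lemma split2 (hmono : MonotoneSF H) (hssa : StronglySubadditive H)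
    {F F₁ F₂ : α → ℝ≥0∞}
    (h : ∀ t : ℝ, 0 < t → {x | ENNReal.ofReal t < F x} ⊆
      {x | ENNReal.ofReal (2⁻¹ * t) < F₁ x} ∪ {x | ENNReal.ofReal (2⁻¹ * t) < F₂ x}) :
    choquet H F ≤ 2 * choquet H F₁ + 2 * choquet H F₂ := by
  have m1 : Measurable fun t : ℝ => H {x | ENNReal.ofReal (2⁻¹ * t) < F₁ x} :=
    (distMeas hmono F₁).comp (measurable_const_mul _)
  have m2 : Measurable fun t : ℝ => H {x | ENNReal.ofReal (2⁻¹ * t) < F₂ x} :=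
    (distMeas hmono F₂).comp (measurable_const_mul _)
  have hstep : choquet H F ≤ ∫⁻ t in Set.Ioi (0:ℝ),
      (H {x | ENNReal.ofReal (2⁻¹ * t) < F₁ x} + H {x | ENNReal.ofReal (2⁻¹ * t) < F₂ x}) :=
    setLIntegral_mono (m1.add m2) fun t ht => le_trans (hmono (h t ht)) (finsub hssa _ _)
  rw [lintegral_add_left m1] at hstep
  rw [lintegral_Ioi_comp_mul (distMeas hmono F₁) (by norm_num : (0:ℝ) < 2⁻¹),
    lintegral_Ioi_comp_mul (distMeas hmono F₂) (by norm_num : (0:ℝ) < 2⁻¹)] at hstep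
  refine hstep.trans (le_of_eq ?_)
  norm_num [choquet]

lemma splitN (hmono : MonotoneSF H) (hcount : CountablySubadditive H)
    {F : α → ℝ≥0∞} {G : ℕ → α → ℝ≥0∞}
    (h : ∀ t : ℝ, 0 < t → {x | ENNReal.ofReal t < F x} ⊆
      ⋃ j, {x | ENNReal.ofReal ((2⁻¹:ℝ)^(j+1) * t) < G j x}) :
    choquet H F ≤ ∑' j : ℕ, ENNReal.ofReal ((2:ℝ)^(j+1)) * choquet H (G j) := by
  have mj : ∀ j : ℕ, Measurable fun t : ℝ => H {x | ENNReal.ofReal ((2⁻¹:ℝ)^(j+1) * t) < G j x} :=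
    fun j => (distMeas hmono (G j)).comp (measurable_const_mul _)
  have hstep : choquet H F ≤ ∫⁻ t in Set.Ioi (0:ℝ),
      ∑' j : ℕ, H {x | ENNReal.ofReal ((2⁻¹:ℝ)^(j+1) * t) < G j x} :=
    setLIntegral_mono (Measurable.ennreal_tsum mj) fun t ht =>
      le_trans (hmono (h t ht)) (hcount _)
  rw [lintegral_tsum (fun j => (mj j).aemeasurable)] at hstep
  refine hstep.trans (le_of_eq (tsum_congr fun j => ?_))
  rw [lintegral_Ioi_comp_mul (distMeas hmono (G j)) (by positivity : (0:ℝ) < (2⁻¹:ℝ)^(j+1))]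
  congr 1
  rw [← inv_pow, inv_inv]

lemma sumHalfGeom {c : ℝ} (hc : 0 ≤ c) :
    ∑' j : ℕ, ENNReal.ofReal (c * (2⁻¹:ℝ)^j) = ENNReal.ofReal (2*c) := by
  have : ∀ j : ℕ, ENNReal.ofReal (c * (2⁻¹:ℝ)^j)
      = ENNReal.ofReal c * (ENNReal.ofReal 2⁻¹)^j := by
    intro j
    rw [ENNReal.ofReal_mul hc, ENNReal.ofReal_pow (by norm_num)]
  simp_rw [this]
  rw [ENNReal.tsum_mul_left, ENNReal.tsum_geometric]
  have h2 : (1 : ℝ≥0∞) - ENNReal.ofReal 2⁻¹ = ENNReal.ofReal 2⁻¹ := by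
    rw [← ENNReal.ofReal_one, ← ENNReal.ofReal_sub _ (by norm_num)]
    norm_num
  rw [h2, ← ENNReal.ofReal_inv_of_pos (by norm_num), inv_inv, ← ENNReal.ofReal_mul hc, mul_comm]

lemma sumGeom (m : ℕ) :
    ∑' j : ℕ, ENNReal.ofReal ((2:ℝ)^(j+1)) * ENNReal.ofReal ((4⁻¹:ℝ)^(m+j))
      = ENNReal.ofReal (4 * (4⁻¹:ℝ)^m) := by
  have key : ∀ j : ℕ, ENNReal.ofReal ((2:ℝ)^(j+1)) * ENNReal.ofReal ((4⁻¹:ℝ)^(m+j))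
      = ENNReal.ofReal ((2 * (4⁻¹:ℝ)^m) * (2⁻¹:ℝ)^j) := by
    intro j
    rw [← ENNReal.ofReal_mul (by positivity)]
    congr 1
    have h4 : ((4:ℝ))⁻¹ ^ j * 2 ^ j = (2:ℝ)⁻¹ ^ j := by
      rw [← mul_pow]; norm_num
    rw [pow_succ, pow_add]
    linear_combination (2*(4⁻¹:ℝ)^m) * h4
  simp_rw [key]
  rw [sumHalfGeom (by positivity)]
  congr 1
  ring

end Aux

/-- Completeness of `L¹(H)`: every Cauchy sequence (for the Choquet
integral) of quasicontinuous functions with finite Choquet integral converges, with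
respect to the Choquet integral, to a quasicontinuous function with finite Choquet
integral. -/
theorem L1H_complete {d : ℕ}
    (H : Set (EuclideanSpace ℝ (Fin d)) → ℝ≥0∞)
    (hmono : MonotoneSF H) (hssa : StronglySubadditive H)
    (hcount : CountablySubadditive H)
    (f : ℕ → EuclideanSpace ℝ (Fin d) → ℝ) (hqc : ∀ n, QuasicontinuousR H (f n))
    (hfin : ∀ n, choquet H (fun x => ENNReal.ofReal |f n x|) < ⊤)
    (hcauchy : ∀ ε : ℝ, 0 < ε → ∃ N : ℕ, ∀ m ≥ N, ∀ n ≥ N,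
      choquet H (fun x => ENNReal.ofReal |f m x - f n x|) ≤ ENNReal.ofReal ε) :
    ∃ g : EuclideanSpace ℝ (Fin d) → ℝ, QuasicontinuousR H g ∧
      choquet H (fun x => ENNReal.ofReal |g x|) < ⊤ ∧
      Filter.Tendsto (fun n => choquet H (fun x => ENNReal.ofReal |f n x - g x|))
        Filter.atTop (nhds 0) := by
  classical
  -- Step 1: subsequence
  choose N hN using fun k : ℕ => hcauchy ((4⁻¹:ℝ)^k) (by positivity)
  let n : ℕ → ℕ := fun k => Nat.rec (N 0) (fun k ih => max (ih + 1) (N (k+1))) k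
  have hn_mono : StrictMono n :=
    strictMono_nat_of_lt_succ fun k => lt_of_lt_of_le (Nat.lt_succ_self _) (le_max_left _ _)
  have hnN : ∀ k, N k ≤ n k := by
    intro k
    cases k with
    | zero => exact le_refl _
    | succ k => exact le_max_right _ _
  have hΔ : ∀ k, choquet H (fun x => ENNReal.ofReal |f (n (k+1)) x - f (n k) x|)
      ≤ ENNReal.ofReal ((4⁻¹:ℝ)^k) := fun k =>
    hN k (n (k+1)) ((hnN k).trans (hn_mono (Nat.lt_succ_self k)).le) (n k) (hnN k)
  -- the limit function
  set g : EuclideanSpace ℝ (Fin d) → ℝ := fun x =>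
    if h : ∃ L, Tendsto (fun k => f (n k) x) atTop (𝓝 L) then h.choose else 0 with hg_def
  have hg_lim : ∀ x L, Tendsto (fun k => f (n k) x) atTop (𝓝 L) → g x = L := by
    intro x L hL
    have hex : ∃ L, Tendsto (fun k => f (n k) x) atTop (𝓝 L) := ⟨L, hL⟩
    rw [hg_def]
    simp only [dif_pos hex]
    exact tendsto_nhds_unique hex.choose_spec hL
  -- key pointwise bound
  have hkey : ∀ (m : ℕ) (x) (t : ℝ), 0 < t →
      (∀ j : ℕ, |f (n (m+j+1)) x - f (n (m+j)) x| ≤ (2⁻¹:ℝ)^(j+1) * t) →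
      |f (n m) x - g x| ≤ t := by
    intro m x t ht hsmall
    set a : ℕ → ℝ := fun j => f (n (m+j)) x with ha
    have hdist : ∀ j, dist (a j) (a (j+1)) ≤ (t/2) * (2⁻¹:ℝ)^j := by
      intro j
      rw [Real.dist_eq]
      have h1 : |a j - a (j+1)| = |f (n (m+j+1)) x - f (n (m+j)) x| := by
        rw [abs_sub_comm]; rfl
      rw [h1]
      calc |f (n (m+j+1)) x - f (n (m+j)) x| ≤ (2⁻¹:ℝ)^(j+1) * t := hsmall j
        _ = (t/2) * (2⁻¹:ℝ)^j := by rw [pow_succ]; ring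
    have hcs : CauchySeq a := cauchySeq_of_le_geometric 2⁻¹ (t/2) (by norm_num) hdist
    obtain ⟨L, hL⟩ := cauchySeq_tendsto_of_complete hcs
    have heq : (fun j => f (n (j+m)) x) = a := funext fun j => by rw [ha]; simp [add_comm]
    have hL' : Tendsto (fun k => f (n k) x) atTop (𝓝 L) :=
      (tendsto_add_atTop_iff_nat m).mp (heq ▸ hL)
    have hg := hg_lim x L hL'
    have hd := dist_le_of_le_geometric_of_tendsto₀ 2⁻¹ (t/2) (by norm_num) hdist hL
    rw [hg]
    have h0 : a 0 = f (n m) x := rfl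
    rw [← Real.dist_eq, ← h0]
    calc dist (a 0) L ≤ (t/2) / (1 - 2⁻¹) := hd
      _ = t := by norm_num; ring
  -- key integral bound
  have hmain : ∀ m : ℕ, choquet H (fun x => ENNReal.ofReal |f (n m) x - g x|)
      ≤ ENNReal.ofReal (4 * (4⁻¹:ℝ)^m) := by
    intro m
    have hsub : ∀ t : ℝ, 0 < t →
        {x | ENNReal.ofReal t < ENNReal.ofReal |f (n m) x - g x|} ⊆
        ⋃ j, {x | ENNReal.ofReal ((2⁻¹:ℝ)^(j+1) * t) <
          (fun x => ENNReal.ofReal |f (n (m+j+1)) x - f (n (m+j)) x|) x} := by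
      intro t ht x hx
      by_contra hnot
      simp only [mem_iUnion, mem_setOf_eq, not_exists, not_lt] at hnot
      have hsm : ∀ j, |f (n (m+j+1)) x - f (n (m+j)) x| ≤ (2⁻¹:ℝ)^(j+1) * t := by
        intro j
        have := hnot j
        rwa [ENNReal.ofReal_le_ofReal_iff (by positivity)] at this
      have hb := hkey m x t ht hsm
      have hx' : t < |f (n m) x - g x| := by
        have hx2 : ENNReal.ofReal t < ENNReal.ofReal |f (n m) x - g x| := hx
        rwa [ENNReal.ofReal_lt_ofReal_iff_of_nonneg ht.le] at hx2
      linarith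
    refine (splitN hmono hcount hsub).trans ?_
    calc ∑' j : ℕ, ENNReal.ofReal ((2:ℝ)^(j+1)) *
          choquet H (fun x => ENNReal.ofReal |f (n (m+j+1)) x - f (n (m+j)) x|)
        ≤ ∑' j : ℕ, ENNReal.ofReal ((2:ℝ)^(j+1)) * ENNReal.ofReal ((4⁻¹:ℝ)^(m+j)) :=
          ENNReal.tsum_le_tsum fun j => mul_le_mul_right (hΔ (m+j)) _
      _ = ENNReal.ofReal (4 * (4⁻¹:ℝ)^m) := sumGeom m
  -- quasicontinuity of g
  have hqcg : ∀ ε : ℝ, 0 < ε → ∃ ω, IsOpen ω ∧ H ω ≤ ENNReal.ofReal ε ∧ ContinuousOn g ωᶜ := by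
    intro ε hε
    obtain ⟨K, hK⟩ : ∃ K : ℕ, (2⁻¹:ℝ)^K < ε / (2*(1+ε)) :=
      exists_pow_lt_of_lt_one (by positivity) (by norm_num)
    choose ω hωo hωH hωc using fun j : ℕ => hqc (n j) (ε * (2⁻¹:ℝ)^(j+2)) (by positivity)
    set S : ℕ → Set (EuclideanSpace ℝ (Fin d)) :=
      fun j => {x | (2⁻¹:ℝ)^j < |f (n (j+1)) x - f (n j) x|} with hS_def
    set U : ℕ → Set (EuclideanSpace ℝ (Fin d)) :=
      fun j => (ω j ∪ ω (j+1)) ∪ S j with hU_def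
    have hUopen : ∀ j, IsOpen (U j) := by
      intro j
      rw [isOpen_iff_mem_nhds]
      intro x hx
      by_cases hV : x ∈ ω j ∪ ω (j+1)
      · exact mem_of_superset (((hωo j).union (hωo (j+1))).mem_nhds hV) subset_union_left
      · have hSx : x ∈ S j := hx.resolve_left hV
        have hc1 : ContinuousOn (fun y => |f (n (j+1)) y - f (n j) y|) (ω j ∪ ω (j+1))ᶜ :=
          (((hωc (j+1)).mono (compl_subset_compl.mpr subset_union_right)).sub
            ((hωc j).mono (compl_subset_compl.mpr subset_union_left))).abs
        have hcw := hc1 x hV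
        have hmem : (fun y => |f (n (j+1)) y - f (n j) y|) ⁻¹' Set.Ioi ((2⁻¹:ℝ)^j)
            ∈ 𝓝[(ω j ∪ ω (j+1))ᶜ] x := hcw (Ioi_mem_nhds hSx)
        obtain ⟨O, hOopen, hxO, hOsub⟩ := mem_nhdsWithin.mp hmem
        refine mem_of_superset (hOopen.mem_nhds hxO) ?_
        intro y hy
        by_cases hyV : y ∈ ω j ∪ ω (j+1)
        · exact Or.inl hyV
        · exact Or.inr (hOsub ⟨hy, hyV⟩)
    have hHS : ∀ j, H (S j) ≤ ENNReal.ofReal ((2⁻¹:ℝ)^j) := by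
      intro j
      have hSeq : S j = {x | ENNReal.ofReal ((2⁻¹:ℝ)^j) <
          (fun x => ENNReal.ofReal |f (n (j+1)) x - f (n j) x|) x} := by
        ext x
        simp only [hS_def, mem_setOf_eq, ENNReal.ofReal_lt_ofReal_iff_of_nonneg
          (by positivity : (0:ℝ) ≤ (2⁻¹:ℝ)^j)]
      rw [hSeq]
      refine (chebyshev hmono _ (by positivity : (0:ℝ) < (2⁻¹:ℝ)^j)).trans ?_
      refine (mul_le_mul_right (hΔ j) _).trans (le_of_eq ?_)
      rw [← ENNReal.ofReal_inv_of_pos (by positivity), ← ENNReal.ofReal_mul (by positivity)]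
      congr 1
      rw [← inv_pow, inv_inv, ← mul_pow]
      norm_num
    have hHU : ∀ j, H (U j) ≤ ENNReal.ofReal ((1+ε) * (2⁻¹:ℝ)^j) := by
      intro j
      have step : H (U j) ≤ (H (ω j) + H (ω (j+1))) + H (S j) :=
        le_trans (finsub hssa _ _) (add_le_add_left (finsub hssa _ _) _)
      refine step.trans ?_
      have b1 := hωH j
      have b2 := hωH (j+1)
      have b3 := hHS j
      calc (H (ω j) + H (ω (j+1))) + H (S j)
          ≤ (ENNReal.ofReal (ε * (2⁻¹:ℝ)^(j+2)) + ENNReal.ofReal (ε * (2⁻¹:ℝ)^(j+1+2)))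
            + ENNReal.ofReal ((2⁻¹:ℝ)^j) := add_le_add (add_le_add b1 b2) b3
        _ = ENNReal.ofReal ((ε * (2⁻¹:ℝ)^(j+2) + ε * (2⁻¹:ℝ)^(j+1+2)) + (2⁻¹:ℝ)^j) := by
            rw [← ENNReal.ofReal_add (by positivity) (by positivity),
              ← ENNReal.ofReal_add (by positivity) (by positivity)]
        _ ≤ ENNReal.ofReal ((1+ε) * (2⁻¹:ℝ)^j) := by
            apply ENNReal.ofReal_le_ofReal
            have hc : (0:ℝ) < (2⁻¹:ℝ)^j := by positivity
            have e1 : (2⁻¹:ℝ)^(j+2) = (2⁻¹:ℝ)^j * 4⁻¹ := by rw [pow_add]; norm_num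
            have e2 : (2⁻¹:ℝ)^(j+1+2) = (2⁻¹:ℝ)^j * 8⁻¹ := by
              rw [show j+1+2 = j+3 by ring, pow_add]; norm_num
            rw [e1, e2]
            nlinarith
    refine ⟨⋃ j, U (K+j), isOpen_iUnion (fun j => hUopen (K+j)), ?_, ?_⟩
    · calc H (⋃ j, U (K+j)) ≤ ∑' j, H (U (K+j)) := hcount _
        _ ≤ ∑' j : ℕ, ENNReal.ofReal (((1+ε)*(2⁻¹:ℝ)^K) * (2⁻¹:ℝ)^j) :=
            ENNReal.tsum_le_tsum fun j => (hHU (K+j)).trans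
              (le_of_eq (congrArg ENNReal.ofReal (by rw [pow_add]; ring)))
        _ = ENNReal.ofReal (2*((1+ε)*(2⁻¹:ℝ)^K)) := sumHalfGeom (by positivity)
        _ ≤ ENNReal.ofReal ε := by
            apply ENNReal.ofReal_le_ofReal
            have := (lt_div_iff₀ (by positivity : (0:ℝ) < 2*(1+ε))).mp hK
            nlinarith
    · -- continuity of g on the complement
      have hsmall' : ∀ x ∈ (⋃ j, U (K+j))ᶜ, ∀ i : ℕ,
          |f (n (K+i+1)) x - f (n (K+i)) x| ≤ (2⁻¹:ℝ)^(K+i) := by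
        intro x hx i
        have h1 : x ∉ U (K+i) := fun h => hx (mem_iUnion.mpr ⟨i, h⟩)
        have h2 : x ∉ S (K+i) := fun h => h1 (Or.inr h)
        simpa [hS_def, not_lt] using h2
      have htuo : TendstoUniformlyOn (fun j x => f (n (K+j)) x) g atTop (⋃ j, U (K+j))ᶜ := by
        rw [Metric.tendstoUniformlyOn_iff]
        intro δ hδ
        have h1 : Tendsto (fun j : ℕ => (2⁻¹:ℝ)^j) atTop (𝓝 0) :=
          tendsto_pow_atTop_nhds_zero_of_lt_one (by norm_num) (by norm_num)
        have h2 : Tendsto (fun j : ℕ => (2⁻¹:ℝ)^(j+K)) atTop (𝓝 0) :=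
          h1.comp (tendsto_add_atTop_nat K)
        have h3 : Tendsto (fun j : ℕ => 2*(2⁻¹:ℝ)^(K+j)) atTop (𝓝 0) := by
          have h4 := h2.const_mul (2:ℝ)
          rw [mul_zero] at h4
          refine h4.congr fun j => by rw [add_comm]
        filter_upwards [h3.eventually_lt_const hδ] with j hj
        intro x hx
        have hb : |f (n (K+j)) x - g x| ≤ 2*(2⁻¹:ℝ)^(K+j) := by
          refine hkey (K+j) x _ (by positivity) ?_
          intro i
          have h5 := hsmall' x hx (j+i)
          have e : K+(j+i) = K+j+i := (add_assoc K j i).symm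
          rw [e] at h5
          refine h5.trans (le_of_eq ?_)
          rw [pow_add, pow_add, pow_succ]
          ring
        calc dist (g x) (f (n (K+j)) x) = |f (n (K+j)) x - g x| := by
              rw [Real.dist_eq, abs_sub_comm]
          _ ≤ 2*(2⁻¹:ℝ)^(K+j) := hb
          _ < δ := hj
      refine htuo.continuousOn (Eventually.of_forall fun j => ?_).frequently
      refine (hωc (K+j)).mono (compl_subset_compl.mpr ?_)
      exact subset_trans (subset_union_left.trans subset_union_left)
        (subset_iUnion (fun i => U (K+i)) j)
  -- finiteness of the limit
  have hgfin : choquet H (fun x => ENNReal.ofReal |g x|) < ⊤ := by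
    have hsub2 : ∀ t:ℝ, 0<t → {x | ENNReal.ofReal t < ENNReal.ofReal |g x|} ⊆
        {x | ENNReal.ofReal (2⁻¹*t) < (fun x => ENNReal.ofReal |f (n 0) x|) x} ∪
        {x | ENNReal.ofReal (2⁻¹*t) < (fun x => ENNReal.ofReal |f (n 0) x - g x|) x} := by
      intro t ht x hx
      rw [mem_setOf_eq, ENNReal.ofReal_lt_ofReal_iff_of_nonneg ht.le] at hx
      by_contra hnot
      simp only [mem_union, mem_setOf_eq, not_or, not_lt] at hnot
      obtain ⟨h1, h2⟩ := hnot
      rw [ENNReal.ofReal_le_ofReal_iff (by positivity)] at h1 h2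
      have htr : |g x| ≤ |f (n 0) x| + |f (n 0) x - g x| := by
        have := abs_sub (f (n 0) x) (f (n 0) x - g x)
        simpa using this
      linarith
    refine lt_of_le_of_lt (split2 hmono hssa hsub2) ?_
    have hB : choquet H (fun x => ENNReal.ofReal |f (n 0) x - g x|) < ⊤ :=
      lt_of_le_of_lt (hmain 0) ENNReal.ofReal_lt_top
    exact ENNReal.add_lt_top.mpr
      ⟨ENNReal.mul_lt_top (by norm_num) (hfin (n 0)), ENNReal.mul_lt_top (by norm_num) hB⟩
  -- convergence
  have htend : Tendsto (fun m => choquet H (fun x => ENNReal.ofReal |f m x - g x|))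
      atTop (𝓝 0) := by
    rw [ENNReal.tendsto_atTop_zero]
    intro ε hε
    have h0 : Tendsto (fun K : ℕ => ENNReal.ofReal (10*(4⁻¹:ℝ)^K)) atTop (𝓝 0) := by
      have h1 : Tendsto (fun K : ℕ => 10*(4⁻¹:ℝ)^K) atTop (𝓝 0) := by
        have := (tendsto_pow_atTop_nhds_zero_of_lt_one
          (by norm_num : (0:ℝ) ≤ 4⁻¹) (by norm_num)).const_mul (10:ℝ)
        rwa [mul_zero] at this
      have := ENNReal.tendsto_ofReal h1
      rwa [ENNReal.ofReal_zero] at this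
    obtain ⟨K, hK⟩ := (h0.eventually_lt_const hε).exists
    refine ⟨n K, fun m hm => ?_⟩
    have hsub3 : ∀ t:ℝ, 0<t → {x | ENNReal.ofReal t < ENNReal.ofReal |f m x - g x|} ⊆
        {x | ENNReal.ofReal (2⁻¹*t) < (fun x => ENNReal.ofReal |f m x - f (n K) x|) x} ∪
        {x | ENNReal.ofReal (2⁻¹*t) < (fun x => ENNReal.ofReal |f (n K) x - g x|) x} := by
      intro t ht x hx
      rw [mem_setOf_eq, ENNReal.ofReal_lt_ofReal_iff_of_nonneg ht.le] at hx
      by_contra hnot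
      simp only [mem_union, mem_setOf_eq, not_or, not_lt] at hnot
      obtain ⟨h1, h2⟩ := hnot
      rw [ENNReal.ofReal_le_ofReal_iff (by positivity)] at h1 h2
      linarith [abs_sub_le (f m x) (f (n K) x) (g x)]
    refine le_trans (split2 hmono hssa hsub3) ?_
    have h1 : choquet H (fun x => ENNReal.ofReal |f m x - f (n K) x|)
        ≤ ENNReal.ofReal ((4⁻¹:ℝ)^K) := hN K m (le_trans (hnN K) hm) (n K) (hnN K)
    have h2 := hmain K
    calc 2 * choquet H (fun x => ENNReal.ofReal |f m x - f (n K) x|)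
          + 2 * choquet H (fun x => ENNReal.ofReal |f (n K) x - g x|)
        ≤ 2 * ENNReal.ofReal ((4⁻¹:ℝ)^K) + 2 * ENNReal.ofReal (4*(4⁻¹:ℝ)^K) :=
          add_le_add (mul_le_mul_right h1 _) (mul_le_mul_right h2 _)
      _ = ENNReal.ofReal (10*(4⁻¹:ℝ)^K) := by
          rw [← ENNReal.ofReal_ofNat 2, ← ENNReal.ofReal_mul (by norm_num),
            ← ENNReal.ofReal_mul (by norm_num), ← ENNReal.ofReal_add (by positivity) (by positivity)]
          congr 1
          ring
      _ ≤ ε := hK.le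
  exact ⟨g, hqcg, hgfin, htend⟩
end
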